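/- Let X be a metric space, let μ be a Borel probability measure on X, let T and T_i (i ∈ ℕ) be continuous maps from X to X, and let ν and ν_i (i ∈ ℕ) be Borel probability measures on X. Assume: (i) the pushforward of ν_i under T_i equals μ for every i; (ii) ν_i converges weakly to ν as i → ∞; (iii) the family (ν_i) is uniformly tight (for every ε > 0 there is a compact K ⊆ X with ν_i(K) ≥ 1 − ε for all i); and (iv) T_i converges to T uniformly on every compact subset of X. Then the pushforward of ν under T equals μ. -/

import Mathlib

open MeasureTheory Filter Metric BoundedContinuousFunction

lemma comp_tendstoUniformlyOn_compact
    {X Y : Type*} [MetricSpace X] [MetricSpace Y]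
    (f : X → Y) (hf : Continuous f) {K : Set X} (hK : IsCompact K)
    {T : X → X} {Ti : ℕ → X → X} (hT : Continuous T)
    (h : TendstoUniformlyOn Ti T atTop K) :
    TendstoUniformlyOn (fun i x => f (Ti i x)) (fun x => f (T x)) atTop K := by
  rw [Metric.tendstoUniformlyOn_iff] at h ⊢
  intro ε hε
  have hδ : ∀ x : X, ∃ δ > 0, ∀ z : X, dist z (T x) < δ → dist (f z) (f (T x)) < ε / 2 := by
    intro x
    rcases Metric.continuousAt_iff.mp (hf.continuousAt (x := T x)) (ε / 2) (by linarith) with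
      ⟨δ, hδpos, hδ⟩
    exact ⟨δ, hδpos, fun z hz => hδ hz⟩
  choose δ hδpos hδ using hδ
  obtain ⟨t, htK, hcover⟩ := hK.elim_nhds_subcover
    (fun x => T ⁻¹' Metric.ball (T x) (δ x / 2))
    (fun x _ => hT.continuousAt.preimage_mem_nhds
      (Metric.ball_mem_nhds _ (by have := hδpos x; linarith)))
  by_cases hne : t.Nonempty
  · set δ0 : ℝ := t.inf' hne (fun x => δ x / 2) with hδ0
    have hδ0pos : 0 < δ0 := by
      rw [hδ0, Finset.lt_inf'_iff]
      exact fun x _ => by have := hδpos x; linarith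
    filter_upwards [h δ0 hδ0pos] with i hi x hx
    obtain ⟨c, hct, hxc⟩ := Set.mem_iUnion₂.mp (hcover hx)
    have hcball : dist (T x) (T c) < δ c / 2 := Metric.mem_ball.mp hxc
    have h1 : dist (T x) (Ti i x) < δ0 := hi x hx
    have hδ0le : δ0 ≤ δ c / 2 := Finset.inf'_le _ hct
    have h2 : dist (Ti i x) (T c) < δ c := by
      calc dist (Ti i x) (T c) ≤ dist (Ti i x) (T x) + dist (T x) (T c) := dist_triangle _ _ _
        _ < δ0 + δ c / 2 := by rw [dist_comm]; exact add_lt_add_of_lt_of_le h1 hcball.le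
        _ ≤ δ c := by linarith
    have h3 : dist (f (Ti i x)) (f (T c)) < ε / 2 := hδ c _ h2
    have h4 : dist (f (T x)) (f (T c)) < ε / 2 := hδ c _ (by linarith [hδpos c])
    calc dist (f (T x)) (f (Ti i x))
        ≤ dist (f (T x)) (f (T c)) + dist (f (T c)) (f (Ti i x)) := dist_triangle _ _ _
      _ < ε / 2 + ε / 2 := add_lt_add h4 (by rwa [dist_comm])
      _ = ε := by ring
  · have : K = ∅ := by
      rw [Finset.not_nonempty_iff_eq_empty] at hne
      subst hne
      simpa using hcover
    filter_upwards with i x hx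
    simp [this] at hx

/-- Abstract limiting mechanism: if `T_{i,*}(ν_i) = μ`, `ν_i → ν` weakly, `(ν_i)` is
uniformly tight, and `T_i → T` uniformly on compact sets (all maps continuous), then
`T_*(ν) = μ`. -/
theorem pushforward_of_weak_limit
    {X : Type*} [MetricSpace X] [MeasurableSpace X] [BorelSpace X]
    (μ ν : ProbabilityMeasure X) (νi : ℕ → ProbabilityMeasure X)
    (T : X → X) (Ti : ℕ → X → X)
    (hT : Continuous T) (hTi : ∀ i, Continuous (Ti i))
    (hpush : ∀ i, (νi i : Measure X).map (Ti i) = (μ : Measure X))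
    (hconv : Tendsto νi atTop (nhds ν))
    (htight : ∀ ε : ℝ, 0 < ε → ∃ K : Set X, IsCompact K ∧
        ∀ i, 1 - ENNReal.ofReal ε ≤ (νi i : Measure X) K)
    (hunif : ∀ K : Set X, IsCompact K → TendstoUniformlyOn Ti T atTop K) :
    (ν : Measure X).map T = (μ : Measure X) := by
  -- the key real-integral identity
  have hreal : ∀ f : X →ᵇ ℝ,
      ∫ x, f x ∂((ν : Measure X).map T) = ∫ x, f x ∂(μ : Measure X) := by
    intro f
    set g : X →ᵇ ℝ := f.compContinuous ⟨T, hT⟩ with hg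
    set gi : ℕ → X →ᵇ ℝ := fun i => f.compContinuous ⟨Ti i, hTi i⟩ with hgi
    have hμi : ∀ i, ∫ x, gi i x ∂(νi i : Measure X) = ∫ x, f x ∂(μ : Measure X) := by
      intro i
      rw [← hpush i, integral_map (hTi i).aemeasurable f.continuous.aestronglyMeasurable]
      rfl
    have hgconv : Tendsto (fun i => ∫ x, g x ∂(νi i : Measure X)) atTop
        (nhds (∫ x, g x ∂(ν : Measure X))) :=
      ProbabilityMeasure.tendsto_iff_forall_integral_tendsto.mp hconv g
    -- difference tends to zero
    have hdiff : Tendsto (fun i => (∫ x, gi i x ∂(νi i : Measure X))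
        - ∫ x, g x ∂(νi i : Measure X)) atTop (nhds 0) := by
      rw [NormedAddCommGroup.tendsto_nhds_zero]
      intro ε hε
      set M : ℝ := ‖f‖ with hM
      have hM0 : 0 ≤ M := norm_nonneg f
      set ε' : ℝ := ε / (8 * (M + 1)) with hε'
      have hε'0 : 0 < ε' := by positivity
      obtain ⟨K, hK, hKt⟩ := htight ε' hε'0
      have hKm : MeasurableSet K := hK.isClosed.measurableSet
      have hUK := comp_tendstoUniformlyOn_compact f f.continuous hK hT (hunif K hK)
      rw [Metric.tendstoUniformlyOn_iff] at hUK
      filter_upwards [hUK (ε / 4) (by linarith)] with i hi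
      have hint_gi : Integrable (fun x => f (Ti i x)) (νi i : Measure X) :=
        (gi i).integrable _
      have hint_g : Integrable (fun x => f (T x)) (νi i : Measure X) := g.integrable _
      have hsub : (∫ x, gi i x ∂(νi i : Measure X)) - ∫ x, g x ∂(νi i : Measure X)
          = ∫ x, (f (Ti i x) - f (T x)) ∂(νi i : Measure X) := by
        rw [integral_sub hint_gi hint_g]; rfl
      have hint : Integrable (fun x => f (Ti i x) - f (T x)) (νi i : Measure X) :=
        hint_gi.sub hint_g
      rw [hsub, ← integral_add_compl hKm hint]
      have hcompl : ((νi i : Measure X) Kᶜ).toReal ≤ ε' := by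
        have h1 : (νi i : Measure X) Kᶜ ≤ ENNReal.ofReal ε' := by
          rw [measure_compl hKm (measure_ne_top _ _), measure_univ]
          calc (1 : ENNReal) - (νi i : Measure X) K
              ≤ 1 - (1 - ENNReal.ofReal ε') := tsub_le_tsub_left (hKt i) 1
            _ ≤ ENNReal.ofReal ε' := by
                rw [tsub_le_iff_right, add_comm]; exact le_tsub_add
        calc ((νi i : Measure X) Kᶜ).toReal ≤ (ENNReal.ofReal ε').toReal :=
              ENNReal.toReal_mono ENNReal.ofReal_ne_top h1
          _ = ε' := ENNReal.toReal_ofReal hε'0.le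
      have hKbound : ‖∫ x in K, (f (Ti i x) - f (T x)) ∂(νi i : Measure X)‖ ≤ ε / 4 := by
        have : ‖∫ x in K, (f (Ti i x) - f (T x)) ∂(νi i : Measure X)‖
            ≤ ε / 4 * ((νi i : Measure X) K).toReal := norm_setIntegral_le_of_norm_le_const (C := ε / 4)
          (measure_lt_top (νi i : Measure X) K)
          (f := fun x => f (Ti i x) - f (T x)) ?_
        · refine this.trans ?_
          have h1 : ((νi i : Measure X) K).toReal ≤ 1 := by
            rw [← ENNReal.toReal_one]
            exact ENNReal.toReal_mono (by simp) prob_le_one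
          nlinarith
        · intro x hx
          have := hi x hx
          rw [Real.norm_eq_abs, abs_sub_comm, ← Real.dist_eq]
          exact (this).le
      have hKcbound : ‖∫ x in Kᶜ, (f (Ti i x) - f (T x)) ∂(νi i : Measure X)‖
          ≤ 2 * (M + 1) * ε' := by
        have : ‖∫ x in Kᶜ, (f (Ti i x) - f (T x)) ∂(νi i : Measure X)‖
            ≤ 2 * (M + 1) * ((νi i : Measure X) Kᶜ).toReal := norm_setIntegral_le_of_norm_le_const (C := 2 * (M + 1))
          (measure_lt_top (νi i : Measure X) Kᶜ)
          (f := fun x => f (Ti i x) - f (T x)) ?_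
        · refine this.trans ?_
          have h0 : (0:ℝ) ≤ ((νi i : Measure X) Kᶜ).toReal := ENNReal.toReal_nonneg
          nlinarith
        · intro x _
          have h1 : |f (Ti i x)| ≤ M := f.norm_coe_le_norm _
          have h2 : |f (T x)| ≤ M := f.norm_coe_le_norm _
          rw [Real.norm_eq_abs]
          calc |f (Ti i x) - f (T x)| ≤ |f (Ti i x)| + |f (T x)| := abs_sub _ _
            _ ≤ 2 * (M + 1) := by linarith
      have h2Mε : 2 * (M + 1) * ε' = ε / 4 := by
        rw [hε']; field_simp; ring
      calc ‖(∫ x in K, (f (Ti i x) - f (T x)) ∂(νi i : Measure X))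
            + ∫ x in Kᶜ, (f (Ti i x) - f (T x)) ∂(νi i : Measure X)‖
          ≤ ‖∫ x in K, (f (Ti i x) - f (T x)) ∂(νi i : Measure X)‖
            + ‖∫ x in Kᶜ, (f (Ti i x) - f (T x)) ∂(νi i : Measure X)‖ := norm_add_le _ _
        _ ≤ ε / 4 + 2 * (M + 1) * ε' := add_le_add hKbound hKcbound
        _ < ε := by rw [h2Mε]; linarith
    -- conclude
    have hA : Tendsto (fun i => ∫ x, gi i x ∂(νi i : Measure X)) atTop
        (nhds (∫ x, g x ∂(ν : Measure X))) := by
      have := hdiff.add hgconv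
      simpa using this
    have hB : Tendsto (fun i => ∫ x, gi i x ∂(νi i : Measure X)) atTop
        (nhds (∫ x, f x ∂(μ : Measure X))) := by
      simp only [hμi]; exact tendsto_const_nhds
    have hgν : ∫ x, g x ∂(ν : Measure X) = ∫ x, f x ∂(μ : Measure X) :=
      tendsto_nhds_unique hA hB
    rw [integral_map hT.aemeasurable f.continuous.aestronglyMeasurable]
    exact hgν
  -- from real integrals to measure equality
  haveI : IsProbabilityMeasure ((ν : Measure X).map T) :=
    Measure.isProbabilityMeasure_map hT.measurable.aemeasurable
  apply ext_of_forall_lintegral_eq_of_IsFiniteMeasure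
  intro f
  have hlip : LipschitzWith 1 ((↑) : NNReal → ℝ) :=
    LipschitzWith.of_dist_le_mul fun x y => by
      simp [NNReal.dist_eq, Real.dist_eq]
  set fR : X →ᵇ ℝ := BoundedContinuousFunction.comp _ hlip f with hfR
  have h1 : ∫⁻ x, (f x : ENNReal) ∂((ν : Measure X).map T) ≠ ⊤ :=
    (lintegral_lt_top_of_nnreal _ f).ne
  have h2 : ∫⁻ x, (f x : ENNReal) ∂(μ : Measure X) ≠ ⊤ :=
    (lintegral_lt_top_of_nnreal _ f).ne
  rw [← ENNReal.toReal_eq_toReal_iff' h1 h2,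
    toReal_lintegral_coe_eq_integral f ((ν : Measure X).map T),
    toReal_lintegral_coe_eq_integral f (μ : Measure X)]
  exact hreal fR
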